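/- Let r = (r_n)_{n≥0} be a sequence of integers with r_n ≥ 2 for all n, and let C_r be the additive subgroup of R generated by {(r_0 ⋯ r_n)^{-1} : n ≥ 0}. Then for every p ≥ 2, the set (C_r)^p ∩ Δ(p,1) ∩ {v ∈ R^p : v > 0} is dense in the unit simplex Δ(p,1). -/

import Mathlib

open Finset

set_option maxHeartbeats 1000000 in
theorem stmt8 (r : ℕ → ℕ) (hr : ∀ n, 2 ≤ r n) (p : ℕ) (hp : 2 ≤ p) :
    ∀ v : Fin p → ℝ, (∀ i, 0 ≤ v i) → (∑ i, v i) = 1 →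
      v ∈ closure {w : Fin p → ℝ |
        (∀ i, w i ∈ AddSubgroup.closure {x : ℝ | ∃ n : ℕ, x = (∏ m ∈ range (n + 1), (r m : ℝ))⁻¹}) ∧
        (∀ i, 0 < w i) ∧ (∑ i, w i) = 1} := by
  intro v hv hsum
  rw [Metric.mem_closure_iff]
  intro ε hε
  have hp0 : (0:ℝ) < p := by positivity
  have hp1 : (1:ℝ) ≤ p := by exact_mod_cast le_trans one_le_two hp
  set δ : ℝ := min (ε/3) (1/2) with hδdef
  have hδpos : 0 < δ := lt_min (by linarith) (by norm_num)
  have hδε : δ ≤ ε/3 := min_le_left _ _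
  have hδ1 : δ ≤ 1 := le_trans (min_le_right _ _) (by norm_num)
  -- choose n with N = r_0 ⋯ r_n large
  have hgrow : ∀ B : ℝ, ∃ n : ℕ, B < ((∏ m ∈ range (n+1), r m : ℕ) : ℝ) := by
    intro B
    refine ⟨⌈B⌉₊, ?_⟩
    have h2 : (⌈B⌉₊ : ℕ) < ∏ m ∈ range (⌈B⌉₊+1), r m := by
      calc ⌈B⌉₊ < 2^⌈B⌉₊ := Nat.lt_two_pow_self
        _ ≤ 2^(⌈B⌉₊+1) := Nat.pow_le_pow_right (by norm_num) (Nat.le_succ _)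
        _ = ∏ _m ∈ range (⌈B⌉₊+1), 2 := by simp
        _ ≤ ∏ m ∈ range (⌈B⌉₊+1), r m := Finset.prod_le_prod' (fun m _ => hr m)
    calc B ≤ (⌈B⌉₊:ℝ) := Nat.le_ceil B
      _ < _ := by exact_mod_cast h2
  obtain ⟨n, hn⟩ := hgrow (max (p^2/δ) (3*p/ε))
  set N : ℕ := ∏ m ∈ range (n+1), r m with hNdef
  have hNposn : 0 < N := Finset.prod_pos (fun m _ => lt_of_lt_of_le two_pos (hr m))
  have hNpos : (0:ℝ) < N := by exact_mod_cast hNposn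
  have hNR : ((N:ℝ)) = ∏ m ∈ range (n+1), (r m : ℝ) := by
    rw [hNdef]; push_cast; ring
  have hmem : ((N:ℝ))⁻¹ ∈ AddSubgroup.closure
      {x : ℝ | ∃ n : ℕ, x = (∏ m ∈ range (n + 1), (r m : ℝ))⁻¹} :=
    AddSubgroup.subset_closure ⟨n, by rw [hNR]⟩
  have hkmem : ∀ k : ℤ, (k : ℝ)/N ∈ AddSubgroup.closure
      {x : ℝ | ∃ n : ℕ, x = (∏ m ∈ range (n + 1), (r m : ℝ))⁻¹} := by
    intro k
    have := AddSubgroup.zsmul_mem _ hmem k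
    simpa [zsmul_eq_mul, div_eq_mul_inv] using this
  have hA : p^2/δ < N := (le_max_left _ _).trans_lt hn
  have hB : 3*p/ε < N := (le_max_right _ _).trans_lt hn
  have hN1 : (p:ℝ)/N < δ/p := by
    rw [div_lt_div_iff₀ hNpos hp0]
    rw [div_lt_iff₀ hδpos] at hA
    nlinarith
  have hN2 : (p:ℝ)/N < ε/3 := by
    rw [div_lt_iff₀ hNpos]
    rw [div_lt_iff₀ hε] at hB
    nlinarith
  set i₀ : Fin p := ⟨0, by omega⟩ with hi₀def
  set v' : Fin p → ℝ := fun i => (1-δ) * v i + δ/p with hv'def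
  set k : Fin p → ℤ := fun i =>
    if i = i₀ then (N:ℤ) - ∑ j ∈ univ.erase i₀, ⌊(N:ℝ) * v' j⌋ else ⌊(N:ℝ) * v' i⌋ with hkdef
  set w : Fin p → ℝ := fun i => (k i : ℝ)/N with hwdef
  have hsum' : ∑ i, v' i = 1 := by
    rw [hv'def]
    rw [Finset.sum_add_distrib, ← Finset.mul_sum, hsum, Finset.sum_const, card_univ,
      Fintype.card_fin, nsmul_eq_mul]
    field_simp
    ring
  have hv'lb : ∀ i, δ/p ≤ v' i := by
    intro i
    have h1 : 0 ≤ (1-δ) * v i := mul_nonneg (by linarith) (hv i)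
    simp only [hv'def]; linarith
  have hvle1 : ∀ i, v i ≤ 1 := by
    intro i
    rw [← hsum]
    exact Finset.single_le_sum (fun j _ => hv j) (mem_univ i)
  have hδploc : δ/p ≤ δ := div_le_self hδpos.le hp1
  have hδppos : 0 < δ/p := div_pos hδpos hp0
  have hv'close : ∀ i, |v' i - v i| ≤ δ := by
    intro i
    have h1 : 0 ≤ δ * v i := mul_nonneg hδpos.le (hv i)
    have h2 : δ * v i ≤ δ := by nlinarith [hvle1 i]
    rw [abs_le]
    constructor
    · simp only [hv'def]; nlinarith
    · simp only [hv'def]; nlinarith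
  -- k is positive away from i₀
  have hpN : (p:ℝ) < δ/p * N := (div_lt_iff₀ hNpos).mp hN1
  have hNv'ge : ∀ j, (1:ℝ) ≤ (N:ℝ) * v' j := by
    intro j
    have h := mul_le_mul_of_nonneg_left (hv'lb j) hNpos.le
    have : (1:ℝ) < (N:ℝ) * v' j := by
      calc (1:ℝ) ≤ p := hp1
        _ < δ/p*N := hpN
        _ = (N:ℝ)*(δ/p) := mul_comm _ _
        _ ≤ _ := h
    exact this.le
  have hfloor_pos : ∀ j, (1:ℤ) ≤ ⌊(N:ℝ) * v' j⌋ := by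
    intro j
    exact Int.le_floor.mpr (by exact_mod_cast hNv'ge j)
  have hkval : ∀ j ∈ univ.erase i₀, k j = ⌊(N:ℝ) * v' j⌋ := by
    intro j hj
    simp only [hkdef, if_neg (Finset.ne_of_mem_erase hj)]
  -- sum of k equals N
  have hsumk : ∑ i, k i = (N:ℤ) := by
    rw [← Finset.sum_erase_add _ _ (mem_univ i₀), Finset.sum_congr rfl hkval]
    simp [hkdef]
  have hsumw : ∑ i, w i = 1 := by
    rw [hwdef, ← Finset.sum_div]
    rw [show ∑ i, (k i : ℝ) = ((∑ i, k i : ℤ) : ℝ) by push_cast; ring, hsumk]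
    exact div_self hNpos.ne'
  -- bounds for w j, j ≠ i₀
  have hwle : ∀ j ∈ univ.erase i₀, w j ≤ v' j := by
    intro j hj
    rw [hwdef]
    simp only
    rw [hkval j hj, div_le_iff₀ hNpos]
    have := Int.floor_le ((N:ℝ) * v' j)
    linarith [this]
  have hwgt : ∀ j ∈ univ.erase i₀, v' j - 1/N < w j := by
    intro j hj
    rw [hwdef]
    simp only
    rw [hkval j hj]
    rw [sub_lt_iff_lt_add, ← add_div, lt_div_iff₀ hNpos]
    have := Int.sub_one_lt_floor ((N:ℝ) * v' j)
    linarith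
  have hwposj : ∀ j ∈ univ.erase i₀, 0 < w j := by
    intro j hj
    rw [hwdef]
    simp only
    rw [hkval j hj]
    have := hfloor_pos j
    positivity
  -- w i₀ analysis
  have hvi0 : v' i₀ = 1 - ∑ j ∈ univ.erase i₀, v' j := by
    have := Finset.sum_erase_add univ v' (mem_univ i₀)
    rw [hsum'] at this
    linarith
  have hwi0 : w i₀ = 1 - ∑ j ∈ univ.erase i₀, w j := by
    have := Finset.sum_erase_add univ w (mem_univ i₀)
    rw [hsumw] at this
    linarith
  have hdiff : w i₀ - v' i₀ = ∑ j ∈ univ.erase i₀, (v' j - w j) := by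
    rw [hwi0, hvi0, Finset.sum_sub_distrib]
    ring
  have hdiff_nonneg : 0 ≤ w i₀ - v' i₀ := by
    rw [hdiff]
    exact Finset.sum_nonneg (fun j hj => by linarith [hwle j hj])
  have hdiff_le : w i₀ - v' i₀ ≤ (p:ℝ)/N := by
    rw [hdiff]
    calc ∑ j ∈ univ.erase i₀, (v' j - w j) ≤ ∑ _j ∈ univ.erase i₀, (1:ℝ)/N :=
          Finset.sum_le_sum (fun j hj => by linarith [hwgt j hj])
      _ = ((univ.erase i₀).card : ℝ) * (1/N) := by rw [Finset.sum_const, nsmul_eq_mul]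
      _ ≤ (p:ℝ) * (1/N) := by
          apply mul_le_mul_of_nonneg_right _ (by positivity)
          have : (univ.erase i₀).card ≤ p := by
            calc (univ.erase i₀).card ≤ (univ : Finset (Fin p)).card := Finset.card_erase_le
              _ = p := by simp
          exact_mod_cast this
      _ = (p:ℝ)/N := by ring
  clear_value δ N i₀ v' k w
  have hwi0pos : 0 < w i₀ := by
    have := hv'lb i₀
    linarith
  refine ⟨w, ⟨?_, ?_, hsumw⟩, ?_⟩
  · intro i
    rw [hwdef]
    exact hkmem (k i)
  · intro i
    by_cases hi : i = i₀
    · rw [hi]; exact hwi0pos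
    · exact hwposj i (Finset.mem_erase.mpr ⟨hi, mem_univ i⟩)
  · rw [dist_pi_lt_iff hε]
    intro i
    rw [Real.dist_eq]
    have hclose := hv'close i
    rw [abs_le] at hclose
    by_cases hi : i = i₀
    · subst hi
      rw [abs_lt]
      constructor <;> nlinarith
    · have hj : i ∈ univ.erase i₀ := Finset.mem_erase.mpr ⟨hi, mem_univ i⟩
      have h1 := hwle i hj
      have h2 := hwgt i hj
      have h1N : (1:ℝ)/N ≤ (p:ℝ)/N := by gcongr
      rw [abs_lt]
      constructor <;> nlinarith
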